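/- arXiv:1808.01832 — 3 statements merged into one kernel-verified Lean document; each statement's English description precedes it below -/
import Mathlib

section
/- For all u, v in the open first quadrant Q with u ≠ v one has E₁(u, −conj(v)) · conj( E₁(u, v) ) = 1; consequently arg E₁(u, −conj(v)) = arg E₁(u, v), i.e. the angle map ψ_{S₁} is invariant under reflecting its second variable across the imaginary axis. (This is the mirror symmetry θ(v,u)_{S₁} = θ(−conj(v), u)_{S₁} of the two-brane superpropagator.) -/
/-- The S₁-superpropagator ratio of the Poisson Sigma Model on the quadrant with
two branes: `E₁(u,v) = ((u − v)(conj u − v)) / ((conj u + v)(u + v))`. -/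
noncomputable def E₁ (u v : ℂ) : ℂ :=
  ((u - v) * ((starRingEnd ℂ) u - v)) / (((starRingEnd ℂ) u + v) * (u + v))

/-- Mirror symmetry `θ(v,u)_{S₁} = θ(−conj v, u)_{S₁}`: for `u, v` in the open
first quadrant with `u ≠ v`, `E₁(u, −conj v) · conj(E₁(u, v)) = 1`, hence the
angle map `ψ_{S₁}` is invariant under reflecting its second variable across the
imaginary axis. -/
theorem E₁_mirror_symmetry (u v : ℂ)
    (hure : 0 < u.re) (huim : 0 < u.im)
    (hvre : 0 < v.re) (hvim : 0 < v.im) (huv : u ≠ v) :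
    E₁ u (-(starRingEnd ℂ) v) * (starRingEnd ℂ) (E₁ u v) = 1 ∧
    (E₁ u (-(starRingEnd ℂ) v)).arg = (E₁ u v).arg := by
  have h1 : u - v ≠ 0 := sub_ne_zero.mpr huv
  have h2 : (starRingEnd ℂ) u - v ≠ 0 := by
    intro h
    have := congrArg Complex.im h
    simp [Complex.sub_im] at this
    linarith
  have h3 : (starRingEnd ℂ) u + v ≠ 0 := by
    intro h
    have := congrArg Complex.re h
    simp [Complex.add_re] at this
    linarith
  have h4 : u + v ≠ 0 := by
    intro h
    have := congrArg Complex.re h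
    simp [Complex.add_re] at this
    linarith
  have h5 : (starRingEnd ℂ) u - (starRingEnd ℂ) v ≠ 0 := by
    intro h
    apply h1
    have := congrArg (starRingEnd ℂ) h
    simpa using this
  have h6 : u - (starRingEnd ℂ) v ≠ 0 := by
    intro h
    have := congrArg Complex.im h
    simp [Complex.sub_im] at this
    linarith
  have h7 : u + (starRingEnd ℂ) v ≠ 0 := by
    intro h
    have := congrArg Complex.re h
    simp [Complex.add_re] at this
    linarith
  have h8 : (starRingEnd ℂ) u + (starRingEnd ℂ) v ≠ 0 := by
    intro h
    apply h4
    have := congrArg (starRingEnd ℂ) h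
    simpa using this
  have key : E₁ u (-(starRingEnd ℂ) v) * (starRingEnd ℂ) (E₁ u v) = 1 := by
    unfold E₁
    rw [map_div₀, div_mul_div_comm, div_eq_one_iff_eq (by
      push_cast [map_mul, map_sub, map_add, Complex.conj_conj]
      exact mul_ne_zero (mul_ne_zero (by simpa [sub_eq_add_neg] using h5) (by simpa [sub_eq_add_neg] using h6))
        (mul_ne_zero h7 h8))]
    push_cast [map_mul, map_sub, map_add, Complex.conj_conj]
    ring
  refine ⟨key, ?_⟩
  have hz : E₁ u v ≠ 0 := by
    intro h
    rw [h] at key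
    simp at key
  have hcz : (starRingEnd ℂ) (E₁ u v) ≠ 0 := by simpa using hz
  have key' : (starRingEnd ℂ) (E₁ u v) * E₁ u (-(starRingEnd ℂ) v) = 1 := by
    rw [mul_comm]; exact key
  have heq : E₁ u (-(starRingEnd ℂ) v) = ((starRingEnd ℂ) (E₁ u v))⁻¹ :=
    eq_inv_of_mul_eq_one_right key'
  rw [heq, Complex.inv_def, Complex.conj_conj, Complex.normSq_conj, mul_comm,
    Complex.arg_real_mul _ (inv_pos.mpr (Complex.normSq_pos.mpr hz))]
end

section
/- For all u, v in the open first quadrant Q with u ≠ v one has E₂(u, conj(v)) · conj( E₂(u, v) ) = 1; consequently arg E₂(u, conj(v)) = arg E₂(u, v), i.e. the angle map ψ_{S₂} is invariant under reflecting its second variable across the real axis. (This is the mirror symmetry θ(conj(v), u)_{S₂} = θ(v, u)_{S₂} of the two-brane superpropagator.) -/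
/-- The S₂-superpropagator ratio of the Poisson Sigma Model on the quadrant with
two branes: `E₂(u,v) = ((u − v)(conj u + v)) / ((conj u − v)(u + v))`. -/
noncomputable def E₂ (u v : ℂ) : ℂ :=
  ((u - v) * ((starRingEnd ℂ) u + v)) / (((starRingEnd ℂ) u - v) * (u + v))

lemma arg_conj_inv (z : ℂ) : ((starRingEnd ℂ) z)⁻¹.arg = z.arg := by
  rw [← map_inv₀]
  by_cases h : z.arg = Real.pi
  · simp [Complex.arg_conj, Complex.arg_inv, h]
  · simp [Complex.arg_conj, Complex.arg_inv, h]
    intro h'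
    have := Complex.neg_pi_lt_arg z
    linarith

/-- Mirror symmetry `θ(conj v, u)_{S₂} = θ(v, u)_{S₂}`: for `u, v` in the open
first quadrant with `u ≠ v`, `E₂(u, conj v) · conj(E₂(u, v)) = 1`, hence the
angle map `ψ_{S₂}` is invariant under reflecting its second variable across the
real axis. -/
theorem E₂_mirror_symmetry (u v : ℂ)
    (hure : 0 < u.re) (huim : 0 < u.im)
    (hvre : 0 < v.re) (hvim : 0 < v.im) (huv : u ≠ v) :
    E₂ u ((starRingEnd ℂ) v) * (starRingEnd ℂ) (E₂ u v) = 1 ∧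
    (E₂ u ((starRingEnd ℂ) v)).arg = (E₂ u v).arg := by
  set c := starRingEnd ℂ
  have h1 : u - c v ≠ 0 := by
    intro h
    have := congrArg Complex.im h
    simp [c, Complex.sub_im, Complex.conj_im] at this
    linarith
  have h2 : c u - c v ≠ 0 := by
    intro h
    exact huv (by have := sub_eq_zero.mp h; simpa [c] using congrArg c this)
  have h3 : c u + c v ≠ 0 := by
    intro h
    have := congrArg Complex.re h
    simp [c, Complex.add_re, Complex.conj_re] at this
    linarith
  have h4 : u + c v ≠ 0 := by
    intro h
    have := congrArg Complex.re h
    simp [c, Complex.add_re, Complex.conj_re] at this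
    linarith
  have key : E₂ u (c v) * c (E₂ u v) = 1 := by
    have : c (E₂ u v) = ((c u - c v) * (u + c v)) / ((u - c v) * (c u + c v)) := by
      simp only [E₂, map_div₀, map_mul, map_sub, map_add, c, Complex.conj_conj]
    rw [this, E₂]
    show ((u - c v) * (c u + c v)) / ((c u - c v) * (u + c v)) *
      (((c u - c v) * (u + c v)) / ((u - c v) * (c u + c v))) = 1
    rw [div_mul_div_comm, mul_comm ((u - c v) * (c u + c v)), div_self]
    exact mul_ne_zero (mul_ne_zero h2 h4) (mul_ne_zero h1 h3)
  refine ⟨key, ?_⟩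
  have hne : c (E₂ u v) ≠ 0 := by
    intro h; rw [h, mul_zero] at key; exact one_ne_zero key.symm
  have : E₂ u (c v) = (c (E₂ u v))⁻¹ := by
    field_simp at key ⊢; linear_combination key
  rw [this]
  exact arg_conj_inv _
end

section
/- Let z and w lie in the open upper half-plane ℍ := {z ∈ ℂ : Im z > 0} with z ≠ w, and let u, v ∈ ℂ satisfy u² = z and v² = w. Then all denominators below are nonzero and ((u − v)·(u + v)) / ((u + conj(v))·(u − conj(v))) = (z − w)/(z − conj(w)) and ((u − v)·(u + v)) / ((conj(u) − v)·(conj(u) + v)) = (z − w)/(conj(z) − w). (Under the substitution u = √z, v = √w this identifies the single-brane superpropagator ratios E_{A₁} and E_{A₂} of the Poisson Sigma Model with Kontsevich's angle ratios, so that θ_{A₁} and θ_{A₂} are Kontsevich's propagator one-forms.) -/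
/-- Under the substitution `u = √z`, `v = √w` mapping the upper half-plane to
the first quadrant, the single-brane superpropagator ratios `E_{A₁}` and
`E_{A₂}` of the Poisson Sigma Model coincide with Kontsevich's angle ratios
`(z − w)/(z − conj w)` and `(z − w)/(conj z − w)`, all denominators being
nonzero. -/
theorem brane_ratios_eq_kontsevich_ratios (z w u v : ℂ)
    (hz : 0 < z.im) (hw : 0 < w.im) (hzw : z ≠ w)
    (hu : u ^ 2 = z) (hv : v ^ 2 = w) :
    (u + (starRingEnd ℂ) v) * (u - (starRingEnd ℂ) v) ≠ 0 ∧
    z - (starRingEnd ℂ) w ≠ 0 ∧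
    ((starRingEnd ℂ) u - v) * ((starRingEnd ℂ) u + v) ≠ 0 ∧
    (starRingEnd ℂ) z - w ≠ 0 ∧
    ((u - v) * (u + v)) / ((u + (starRingEnd ℂ) v) * (u - (starRingEnd ℂ) v)) =
      (z - w) / (z - (starRingEnd ℂ) w) ∧
    ((u - v) * (u + v)) / (((starRingEnd ℂ) u - v) * ((starRingEnd ℂ) u + v)) =
      (z - w) / ((starRingEnd ℂ) z - w) := by
  have e1 : (u + (starRingEnd ℂ) v) * (u - (starRingEnd ℂ) v) = z - (starRingEnd ℂ) w := by
    have : ((starRingEnd ℂ) v) ^ 2 = (starRingEnd ℂ) w := by rw [← hv]; ring_nf; rw [← map_pow]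
    rw [← hu, ← this]; ring
  have e2 : ((starRingEnd ℂ) u - v) * ((starRingEnd ℂ) u + v) = (starRingEnd ℂ) z - w := by
    have : ((starRingEnd ℂ) u) ^ 2 = (starRingEnd ℂ) z := by rw [← hu]; ring_nf; rw [← map_pow]
    rw [← hv, ← this]; ring
  have e0 : (u - v) * (u + v) = z - w := by rw [← hu, ← hv]; ring
  have h1 : z - (starRingEnd ℂ) w ≠ 0 := by
    intro h
    have := congrArg Complex.im h
    simp [Complex.sub_im, Complex.conj_im] at this
    linarith
  have h2 : (starRingEnd ℂ) z - w ≠ 0 := by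
    intro h
    have := congrArg Complex.im h
    simp [Complex.sub_im, Complex.conj_im] at this
    linarith
  refine ⟨e1 ▸ h1, h1, e2 ▸ h2, h2, by rw [e0, e1], by rw [e0, e2]⟩
end
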